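/- If G is a square graph and H is any graph with at least one vertex, then the strong product G ⊠ H is a square. -/

import Mathlib

open SimpleGraph

/-- Butterfly involution data: `φ` is an involutive automorphism of `G`, with nonempty
fixed set and nonempty non-fixed set, the common-neighbor condition, and a partition
`A0 ∪ A1` of the non-fixed vertices with no crossing edges, swapped by `φ`. -/
def ButterflyData {V : Type*} (G : SimpleGraph V) (phi : G ≃g G) (A0 A1 : Set V) : Prop :=
  Function.Involutive phi ∧
  (∃ v, phi v = v) ∧ (∃ v, phi v ≠ v) ∧
  (∀ u : V, phi u ≠ u →
    G.neighborSet u ∩ G.neighborSet (phi u) = G.neighborSet u ∩ {v | phi v = v}) ∧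
  A0 ∪ A1 = {v | phi v ≠ v} ∧ Disjoint A0 A1 ∧
  (∀ a ∈ A0, ∀ b ∈ A1, ¬ G.Adj a b) ∧
  (∀ a ∈ A0, phi a ∈ A1) ∧ (∀ a ∈ A1, phi a ∈ A0)

/-- A graph is a square (in the gluing algebra) iff it admits a butterfly involution. -/
def IsSquareGraph {V : Type*} (G : SimpleGraph V) : Prop :=
  ∃ (phi : G ≃g G) (A0 A1 : Set V), ButterflyData G phi A0 A1

/-- The strong product of two graphs. -/
def strongProd {α β : Type*} (G : SimpleGraph α) (H : SimpleGraph β) :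
    SimpleGraph (α × β) where
  Adj x y := x ≠ y ∧ (x.1 = y.1 ∨ G.Adj x.1 y.1) ∧ (x.2 = y.2 ∨ H.Adj x.2 y.2)
  symm := ⟨fun x y h =>
    ⟨h.1.symm, h.2.1.imp Eq.symm SimpleGraph.Adj.symm, h.2.2.imp Eq.symm SimpleGraph.Adj.symm⟩⟩
  loopless := ⟨fun x h => h.1 rfl⟩

lemma strongProd_adj' {α β : Type*} (G : SimpleGraph α) (H : SimpleGraph β)
    (a x : α) (b y : β) :
    (strongProd G H).Adj (a, b) (x, y) ↔
      ¬(a = x ∧ b = y) ∧ (a = x ∨ G.Adj a x) ∧ (b = y ∨ H.Adj b y) := by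
  constructor
  · rintro ⟨h1, h2, h3⟩
    exact ⟨fun h => h1 (Prod.ext h.1 h.2), h2, h3⟩
  · rintro ⟨h1, h2, h3⟩
    exact ⟨fun h => h1 ⟨congrArg Prod.fst h, congrArg Prod.snd h⟩, h2, h3⟩

theorem stmt17 {α β : Type*} [Fintype α] [Fintype β] (G : SimpleGraph α)
    (H : SimpleGraph β) (hG : IsSquareGraph G) (hβ : Nonempty β) :
    IsSquareGraph (strongProd G H) := by
  obtain ⟨φ, A0, A1, hinv, ⟨vf, hvf⟩, ⟨vn, hvn⟩, hN, hpart, hdisj, hcross, h01, h10⟩ := hG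
  obtain ⟨b0⟩ := hβ
  have hnoadj : ∀ a : α, φ a ≠ a → ¬ G.Adj a (φ a) := by
    intro a ha
    have : a ∈ A0 ∪ A1 := by rw [hpart]; exact ha
    rcases this with h | h
    · exact hcross a h (φ a) (h01 a h)
    · intro hadj; exact hcross (φ a) (h10 a h) a h hadj.symm
  have hNkey : ∀ a : α, φ a ≠ a → ∀ x : α,
      (G.Adj a x ∧ G.Adj (φ a) x) ↔ (G.Adj a x ∧ φ x = x) := by
    intro a ha x
    have := Set.ext_iff.mp (hN a ha) x
    simpa [SimpleGraph.mem_neighborSet, adj_comm] using this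
  let Φ : strongProd G H ≃g strongProd G H :=
    ⟨(φ.toEquiv).prodCongr (Equiv.refl β), by
      rintro ⟨x1, x2⟩ ⟨y1, y2⟩
      show (strongProd G H).Adj (φ x1, x2) (φ y1, y2) ↔ _
      rw [strongProd_adj', strongProd_adj']
      have e1 : φ x1 = φ y1 ↔ x1 = y1 := φ.toEquiv.injective.eq_iff
      have e2 : G.Adj (φ x1) (φ y1) ↔ G.Adj x1 y1 := φ.map_adj_iff
      rw [e1, e2]⟩
  have hΦ : ∀ p : α × β, Φ p = (φ p.1, p.2) := fun p => rfl
  refine ⟨Φ, A0 ×ˢ Set.univ, A1 ×ˢ Set.univ, ?_, ?_, ?_, ?_, ?_, ?_, ?_, ?_, ?_⟩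
  · intro p
    rw [hΦ, hΦ]
    exact Prod.ext (hinv p.1) rfl
  · exact ⟨(vf, b0), by rw [hΦ]; exact Prod.ext hvf rfl⟩
  · refine ⟨(vn, b0), ?_⟩
    rw [hΦ]
    intro h
    exact hvn (congrArg Prod.fst h)
  · rintro ⟨a, b⟩ hab
    have ha : φ a ≠ a := by
      intro h; apply hab; rw [hΦ]; exact Prod.ext h rfl
    ext ⟨x, y⟩
    simp only [SimpleGraph.mem_neighborSet, Set.mem_inter_iff, Set.mem_setOf_eq, hΦ,
      strongProd_adj']
    constructor
    · rintro ⟨⟨hne1, hc1, hc2⟩, ⟨hne2, hc1', hc2'⟩⟩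
      have hxa : G.Adj a x ∧ G.Adj (φ a) x := by
        rcases hc1 with h | h <;> rcases hc1' with h' | h'
        · exact absurd (h'.trans h.symm) ha
        · subst h; exact absurd h'.symm (hnoadj a ha)
        · subst h'; exact absurd h (hnoadj a ha)
        · exact ⟨h, h'⟩
      have hkey := (hNkey a ha x).mp hxa
      exact ⟨⟨hne1, Or.inr hkey.1, hc2⟩, Prod.ext hkey.2 rfl⟩
    · rintro ⟨⟨hne1, hc1, hc2⟩, hfx⟩
      have hfx1 : φ x = x := congrArg Prod.fst hfx
      have hadj : G.Adj a x := by
        rcases hc1 with h | h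
        · exfalso; apply ha; rw [← h] at hfx1; exact hfx1
        · exact h
      have hkey := (hNkey a ha x).mpr ⟨hadj, hfx1⟩
      refine ⟨⟨hne1, hc1, hc2⟩, ?_, Or.inr hkey.2, hc2⟩
      rintro ⟨h1, -⟩
      apply ha
      have h2 : φ (φ a) = φ a := by rw [h1]; exact hfx1
      exact ((hinv a).symm.trans h2).symm
  · ext ⟨a, b⟩
    simp only [Set.mem_union, Set.mem_prod, Set.mem_univ, and_true, Set.mem_setOf_eq, hΦ]
    have h := Set.ext_iff.mp hpart a
    simp only [Set.mem_union, Set.mem_setOf_eq] at h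
    constructor
    · intro hh heq
      exact (h.mp hh) (congrArg Prod.fst heq)
    · intro hh
      apply h.mpr
      intro heq
      exact hh (Prod.ext heq rfl)
  · rw [Set.disjoint_left]
    rintro ⟨a, b⟩ ha hb
    exact Set.disjoint_left.mp hdisj ha.1 hb.1
  · rintro ⟨a, b⟩ ha ⟨a', b'⟩ hb hadj
    rw [strongProd_adj'] at hadj
    rcases hadj.2.1 with h | h
    · exact Set.disjoint_left.mp hdisj ha.1 (h ▸ hb.1)
    · exact hcross a ha.1 a' hb.1 h
  · rintro ⟨a, b⟩ ha
    exact ⟨h01 a ha.1, trivial⟩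
  · rintro ⟨a, b⟩ ha
    exact ⟨h10 a ha.1, trivial⟩
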